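/- arXiv:1010.1278 — 2 statements merged into one kernel-verified Lean document; each statement's English description precedes it below -/
import Mathlib

section
/- Let R be a commutative noetherian local ring, A an artinian R-module, and N a noetherian (finitely generated) R-module. Then the R-module Hom_R(A, N) has finite length. -/
/-!
Common definitions: `Ext`/`Tor` as objects of `ModuleCat R`, mini-max modules,
injective hulls of the residue field, Matlis biduality, module length, and the
`m`-adic completion of a local ring.
-/

open CategoryTheory IsLocalRing TensorProduct

universe u

/-- `Ext^i_R(A, B)`, as an object of `ModuleCat R` (Mathlib's derived-functor `Ext`). -/
noncomputable def extMod (R : Type u) [CommRing R] (i : ℕ) (A B : Type u)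
    [AddCommGroup A] [Module R A] [AddCommGroup B] [Module R B] : ModuleCat.{u} R :=
  ((Ext R (ModuleCat.{u} R) i).obj (Opposite.op (ModuleCat.of R A))).obj (ModuleCat.of R B)

/-- `Tor_i^R(A, B)`, as an object of `ModuleCat R`. -/
noncomputable def torMod (R : Type u) [CommRing R] (i : ℕ) (A B : Type u)
    [AddCommGroup A] [Module R A] [AddCommGroup B] [Module R B] : ModuleCat.{u} R :=
  ((Tor (ModuleCat.{u} R) i).obj (ModuleCat.of R A)).obj (ModuleCat.of R B)

/-- An `R`-module `M` is mini-max if it has a noetherian submodule `N` such that `M/N`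
is artinian. -/
def IsMiniMax (R M : Type u) [CommRing R] [AddCommGroup M] [Module R M] : Prop :=
  ∃ N : Submodule R M, IsNoetherian R N ∧ IsArtinian R (M ⧸ N)

/-- `E` is an injective hull of the residue field `k` of the local ring `R`:
`E` is injective and is an essential extension of `k`. -/
def IsInjectiveHullOfResidueField (R E : Type u) [CommRing R] [IsLocalRing R]
    [AddCommGroup E] [Module R E] : Prop :=
  Module.Injective R E ∧
    ∃ f : ResidueField R →ₗ[R] E, Function.Injective f ∧
      ∀ S : Submodule R E, S ≠ ⊥ → S ⊓ LinearMap.range f ≠ ⊥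

/-- The Matlis biduality map `M → Hom_R(Hom_R(M, E), E)`, `x ↦ (ψ ↦ ψ x)`. -/
def matlisBidual (R M E : Type u) [CommRing R] [AddCommGroup M] [Module R M]
    [AddCommGroup E] [Module R E] : M →ₗ[R] ((M →ₗ[R] E) →ₗ[R] E) :=
  LinearMap.applyₗ

/-- `M` is Matlis reflexive (with respect to `E`): the biduality map is an isomorphism. -/
def IsMatlisReflexive (R M E : Type u) [CommRing R] [AddCommGroup M] [Module R M]
    [AddCommGroup E] [Module R E] : Prop :=
  Function.Bijective (matlisBidual R M E)

/-- The length of an `R`-module `M`, valued in `ℕ∞`: the supremum of the lengths of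
chains of submodules of `M`. -/
noncomputable def moduleLength (R M : Type u) [Semiring R] [AddCommMonoid M] [Module R M] :
    ℕ∞ :=
  (Order.krullDim (Submodule R M)).unbotD 0

/-- `inf { i ≥ 0 | Ext^i_R(K, L) ≠ 0 }`, computed in `ℕ∞` (so it is `⊤` when all the
`Ext` modules vanish).  Taking `K = R/m` gives `depth_R(L)`; taking `K = R/a` gives
`depth_R(a; L)`. -/
noncomputable def extInf (R : Type u) [CommRing R] (K L : Type u)
    [AddCommGroup K] [Module R K] [AddCommGroup L] [Module R L] : ℕ∞ :=
  sInf {n : ℕ∞ | ∃ i : ℕ, n = i ∧ Nontrivial (extMod R i K L)}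

/-- The `m`-adic completion `R̂` of the local ring `R`. -/
abbrev Rhat (R : Type u) [CommRing R] [IsLocalRing R] : Type u :=
  AdicCompletion (maximalIdeal R) R

section Aux

variable {R : Type u} [CommRing R] [IsLocalRing R]

/-- A module killed by the maximal ideal of a local ring is semisimple. -/
theorem isSemisimpleModule_of_torsionBy_maximalIdeal {M : Type u} [AddCommGroup M] [Module R M]
    (h : Module.IsTorsionBySet R M (maximalIdeal R : Ideal R)) :
    IsSemisimpleModule R M := by
  letI := h.module
  letI : Field (R ⧸ maximalIdeal R) := Ideal.Quotient.field _
  let l : M →ₛₗ[Ideal.Quotient.mk (maximalIdeal R)] M :=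
    { toFun := id
      map_add' := fun _ _ => rfl
      map_smul' := fun r x => (h.mk_smul r x).symm }
  exact (l.isSemisimpleModule_iff_of_bijective Function.bijective_id).mpr inferInstance

/-- An artinian module killed by a power of the maximal ideal is noetherian. -/
theorem isNoetherian_of_isArtinian_of_torsionBy_pow (t : ℕ) {M : Type u}
    [AddCommGroup M] [Module R M] [IsArtinian R M]
    (h : Module.IsTorsionBySet R M ((maximalIdeal R ^ t : Ideal R) : Set R)) :
    IsNoetherian R M := by
  induction t generalizing M with
  | zero =>
    have h1 : (1 : R) ∈ ((maximalIdeal R ^ 0 : Ideal R) : Set R) := by simp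
    haveI : Subsingleton M := ⟨fun x y => by
      have hx : (1 : R) • x = 0 := @h x ⟨1, h1⟩
      have hy : (1 : R) • y = 0 := @h y ⟨1, h1⟩
      rw [one_smul] at hx hy; rw [hx, hy]⟩
    infer_instance
  | succ t ih =>
    set P : Submodule R M := (maximalIdeal R ^ t) • ⊤ with hP
    have hbot : (maximalIdeal R ^ (t + 1)) • (⊤ : Submodule R M) = ⊥ := by
      rw [eq_bot_iff]
      refine Submodule.smul_le.2 fun r hr x _ => ?_
      exact (Submodule.mem_bot R).2 (@h x ⟨r, hr⟩)
    have hbot' : maximalIdeal R • P = ⊥ := by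
      rw [hP, ← Submodule.smul_assoc, smul_eq_mul, ← pow_succ']; exact hbot
    have hPtor : Module.IsTorsionBySet R P ((maximalIdeal R : Ideal R) : Set R) := by
      intro x r
      have hmem : (r : R) • (x : M) ∈ maximalIdeal R • P :=
        Submodule.smul_mem_smul r.2 x.2
      rw [hbot'] at hmem
      exact Subtype.ext (by simpa using hmem)
    haveI := isSemisimpleModule_of_torsionBy_maximalIdeal hPtor
    haveI : IsNoetherian R P :=
      ((IsSemisimpleModule.finite_tfae (M := ↥P)).out 2 1).mp (inferInstance : IsArtinian R ↥P)
    have hQtor : Module.IsTorsionBySet R (M ⧸ P) ((maximalIdeal R ^ t : Ideal R) : Set R) :=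
      Module.isTorsionBySet_quotient_ideal_smul M _
    haveI : IsNoetherian R (M ⧸ P) := ih hQtor
    exact (isNoetherian_iff_submodule_quotient P).mpr ⟨‹_›, ‹_›⟩

/-- A noetherian module killed by a power of the maximal ideal is artinian. -/
theorem isArtinian_of_isNoetherian_of_torsionBy_pow (t : ℕ) {M : Type u}
    [AddCommGroup M] [Module R M] [IsNoetherian R M]
    (h : Module.IsTorsionBySet R M ((maximalIdeal R ^ t : Ideal R) : Set R)) :
    IsArtinian R M := by
  induction t generalizing M with
  | zero =>
    have h1 : (1 : R) ∈ ((maximalIdeal R ^ 0 : Ideal R) : Set R) := by simp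
    haveI : Subsingleton M := ⟨fun x y => by
      have hx : (1 : R) • x = 0 := @h x ⟨1, h1⟩
      have hy : (1 : R) • y = 0 := @h y ⟨1, h1⟩
      rw [one_smul] at hx hy; rw [hx, hy]⟩
    infer_instance
  | succ t ih =>
    set P : Submodule R M := (maximalIdeal R ^ t) • ⊤ with hP
    have hbot : (maximalIdeal R ^ (t + 1)) • (⊤ : Submodule R M) = ⊥ := by
      rw [eq_bot_iff]
      refine Submodule.smul_le.2 fun r hr x _ => ?_
      exact (Submodule.mem_bot R).2 (@h x ⟨r, hr⟩)
    have hbot' : maximalIdeal R • P = ⊥ := by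
      rw [hP, ← Submodule.smul_assoc, smul_eq_mul, ← pow_succ']; exact hbot
    have hPtor : Module.IsTorsionBySet R P ((maximalIdeal R : Ideal R) : Set R) := by
      intro x r
      have hmem : (r : R) • (x : M) ∈ maximalIdeal R • P :=
        Submodule.smul_mem_smul r.2 x.2
      rw [hbot'] at hmem
      exact Subtype.ext (by simpa using hmem)
    haveI := isSemisimpleModule_of_torsionBy_maximalIdeal hPtor
    haveI : IsArtinian R P :=
      ((IsSemisimpleModule.finite_tfae (M := ↥P)).out 1 2).mp (inferInstance : IsNoetherian R ↥P)
    have hQtor : Module.IsTorsionBySet R (M ⧸ P) ((maximalIdeal R ^ t : Ideal R) : Set R) :=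
      Module.isTorsionBySet_quotient_ideal_smul M _
    haveI : IsArtinian R (M ⧸ P) := ih hQtor
    exact (isArtinian_iff_submodule_quotient P).mpr ⟨‹_›, ‹_›⟩

/-- In an artinian module over a noetherian local ring, every element is killed by a power of
the maximal ideal. -/
theorem exists_pow_maximalIdeal_smul_eq_zero [IsNoetherianRing R]
    {M : Type u} [AddCommGroup M] [Module R M] [IsArtinian R M] (a : M) :
    ∃ n : ℕ, ∀ r ∈ maximalIdeal R ^ n, r • a = 0 := by
  set f : ℕ →o (Submodule R M)ᵒᵈ :=
    ⟨fun n => (maximalIdeal R ^ n) • (R ∙ a), fun i j hij =>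
      Submodule.smul_mono_left (Ideal.pow_le_pow_right hij)⟩ with hf
  obtain ⟨n, hn⟩ := IsArtinian.monotone_stabilizes f
  have hfg : ((maximalIdeal R ^ n) • (R ∙ a) : Submodule R M).FG := by
    have hmap : ((maximalIdeal R ^ n) • (R ∙ a) : Submodule R M) =
        Submodule.map (LinearMap.toSpanSingleton R M a) (maximalIdeal R ^ n) := by
      apply le_antisymm
      · refine Submodule.smul_le.2 fun r hr x hx => ?_
        obtain ⟨c, rfl⟩ := Submodule.mem_span_singleton.1 hx
        exact ⟨r * c, Ideal.mul_mem_right c _ hr, by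
          simp [LinearMap.toSpanSingleton_apply, mul_smul, smul_comm r c a]⟩
      · rintro x ⟨r, hr, rfl⟩
        exact Submodule.smul_mem_smul hr (Submodule.mem_span_singleton_self a)
    rw [hmap]
    exact Submodule.FG.map _ (IsNoetherian.noetherian _)
  have hstep : ((maximalIdeal R ^ n) • (R ∙ a) : Submodule R M) ≤
      maximalIdeal R • ((maximalIdeal R ^ n) • (R ∙ a)) := by
    have := hn (n + 1) (Nat.le_succ n)
    have h1 : ((maximalIdeal R ^ n) • (R ∙ a) : Submodule R M) =
        (maximalIdeal R ^ (n + 1)) • (R ∙ a) := congrArg OrderDual.ofDual this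
    refine le_of_eq ?_
    calc ((maximalIdeal R ^ n) • (R ∙ a) : Submodule R M)
        = (maximalIdeal R ^ (n + 1)) • (R ∙ a) := h1
      _ = (maximalIdeal R • maximalIdeal R ^ n) • (R ∙ a) := by
          rw [smul_eq_mul, ← pow_succ']
      _ = maximalIdeal R • ((maximalIdeal R ^ n) • (R ∙ a)) :=
          Submodule.smul_assoc _ _ _
  have hjac : maximalIdeal R ≤ Ideal.jacobson ⊥ := by
    rw [IsLocalRing.jacobson_eq_maximalIdeal ⊥ bot_ne_top]
  have hbot := Submodule.eq_bot_of_le_smul_of_le_jacobson_bot (maximalIdeal R) _ hfg hstep hjac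
  refine ⟨n, fun r hr => ?_⟩
  have : r • a ∈ ((maximalIdeal R ^ n) • (R ∙ a) : Submodule R M) :=
    Submodule.smul_mem_smul hr (Submodule.mem_span_singleton_self a)
  rw [hbot] at this
  simpa using this

end Aux

/-- If `R` is a commutative noetherian local ring, `A` is an artinian `R`-module and `N`
is a noetherian (finitely generated) `R`-module, then `Hom_R(A, N)` has finite length. -/
theorem hom_artinian_noetherian_isFiniteLength
    (R : Type u) [CommRing R] [IsNoetherianRing R] [IsLocalRing R]
    (A N : Type u) [AddCommGroup A] [Module R A] [AddCommGroup N] [Module R N]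
    [IsArtinian R A] [Module.Finite R N] :
    IsFiniteLength R (A →ₗ[R] N) := by
    classical
  set g : ℕ →o Submodule R N :=
    ⟨fun i => Submodule.torsionBySet R N ((maximalIdeal R ^ i : Ideal R) : Set R),
     fun i j hij => Submodule.torsionBySet_le_torsionBySet_of_subset
       (Ideal.pow_le_pow_right hij)⟩ with hg
  obtain ⟨t, ht⟩ := monotone_stabilizes_iff_noetherian.mpr inferInstance g
  have key : ∀ (φ : A →ₗ[R] N) (a : A), φ a ∈ g t := by
    intro φ a
    obtain ⟨n, hn⟩ := exists_pow_maximalIdeal_smul_eq_zero (R := R) a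
    have h1 : φ a ∈ g n := (Submodule.mem_torsionBySet_iff _ _).2 fun r => by
      rw [← map_smul, hn r r.2, map_zero]
    have h2 : φ a ∈ g (max n t) := g.monotone (le_max_left n t) h1
    rwa [← ht (max n t) (le_max_right n t)] at h2
  set S : Submodule R A := (maximalIdeal R ^ t) • ⊤ with hS
  have hker : ∀ φ : A →ₗ[R] N, S ≤ LinearMap.ker φ := fun φ =>
    Submodule.smul_le.2 fun r hr a _ => by
      have h0 : r • φ a = 0 := (Submodule.mem_torsionBySet_iff _ _).1 (key φ a) ⟨r, hr⟩
      simp only [LinearMap.mem_ker, map_smul, h0]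
  have hAtor : Module.IsTorsionBySet R (A ⧸ S) ((maximalIdeal R ^ t : Ideal R) : Set R) :=
    Module.isTorsionBySet_quotient_ideal_smul A _
  haveI : IsNoetherian R (A ⧸ S) := isNoetherian_of_isArtinian_of_torsionBy_pow t hAtor
  obtain ⟨s, hs⟩ := IsNoetherian.noetherian (⊤ : Submodule R (A ⧸ S))
  have hsur := Submodule.Quotient.mk_surjective S
  choose lift hlift using hsur
  set a : s → A := fun i => lift (i : A ⧸ S) with ha
  set Γ : Submodule R N := g t with hΓ
  haveI : IsArtinian R Γ :=
    isArtinian_of_isNoetherian_of_torsionBy_pow t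
      (Submodule.torsionBySet_isTorsionBySet _)
  let Φ : (A →ₗ[R] N) →ₗ[R] (s → Γ) :=
    { toFun := fun φ i => ⟨φ (a i), key φ (a i)⟩
      map_add' := fun φ ψ => funext fun i => Subtype.ext rfl
      map_smul' := fun r φ => funext fun i => Subtype.ext rfl }
  have hinj : Function.Injective Φ := by
    rw [injective_iff_map_eq_zero]
    intro φ hφ
    have hai : ∀ i : s, φ (a i) = 0 := fun i => by
      have := congrFun hφ i
      exact congrArg Subtype.val this
    have hmk : Submodule.map S.mkQ (Submodule.span R (Set.range a)) = ⊤ := by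
      rw [Submodule.map_span, ← Set.range_comp]
      have hco : (S.mkQ ∘ a) = fun i : s => (i : A ⧸ S) := funext fun i => hlift _
      rw [hco, ← hs]
      congr 1
      exact Subtype.range_coe
    have htop : Submodule.span R (Set.range a) ⊔ S = ⊤ := by
      have hc := congrArg (Submodule.comap S.mkQ) hmk
      rwa [Submodule.comap_map_eq, Submodule.ker_mkQ, Submodule.comap_top] at hc
    have hspan : Submodule.span R (Set.range a) ≤ LinearMap.ker φ :=
      Submodule.span_le.2 (by rintro x ⟨i, rfl⟩; exact hai i)
    ext x
    have hx : x ∈ Submodule.span R (Set.range a) ⊔ S := htop ▸ Submodule.mem_top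
    obtain ⟨y, hy, z, hz, rfl⟩ := Submodule.mem_sup.1 hx
    have hφy : φ y = 0 := hspan hy
    have hφz : φ z = 0 := hker φ hz
    simp [map_add, hφy, hφz]
  haveI : IsNoetherian R (A →ₗ[R] N) := isNoetherian_of_injective Φ hinj
  haveI : IsArtinian R (A →ₗ[R] N) := isArtinian_of_injective Φ hinj
  rw [isFiniteLength_iff_isNoetherian_isArtinian]
  exact ⟨‹_›, ‹_›⟩
end

section
/- Let R be a commutative noetherian local ring and let A and A' be artinian R-modules. Then the R-module A ⊗_R A' has finite length. -/
/-!
Common definitions: `Ext`/`Tor` as objects of `ModuleCat R`, mini-max modules,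
injective hulls of the residue field, Matlis biduality, module length, and the
`m`-adic completion of a local ring.
-/

open CategoryTheory IsLocalRing TensorProduct

universe u

section QuotTransfer

variable {R : Type u} [CommRing R] (I : Ideal R) {M : Type u} [AddCommGroup M] [Module R M]
  [Module (R ⧸ I) M] [IsScalarTower R (R ⧸ I) M]

/-- Every `R`-submodule of an `R ⧸ I`-module is an `R ⧸ I`-submodule. -/
private def quotEmbed : Submodule R M ↪o Submodule (R ⧸ I) M :=
  OrderEmbedding.ofMapLEIff (fun p =>
    { carrier := p
      add_mem' := fun h1 h2 => p.add_mem h1 h2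
      zero_mem' := p.zero_mem
      smul_mem' := by
        rintro c x hx
        obtain ⟨r, rfl⟩ := Ideal.Quotient.mk_surjective c
        have : (Ideal.Quotient.mk I r) • x = r • x := by
          rw [← Ideal.Quotient.algebraMap_eq, algebraMap_smul]
        rw [this]
        exact p.smul_mem r hx }) (fun a b => Iff.rfl)

lemma isArtinian_of_quotScalars (h : IsArtinian (R ⧸ I) M) : IsArtinian R M :=
  ⟨(quotEmbed I).wellFounded h.wf⟩

lemma isNoetherian_of_quotScalars (h : IsNoetherian (R ⧸ I) M) : IsNoetherian R M :=
  isNoetherian_mk ⟨(quotEmbed I).dual.wellFounded h.wellFoundedGT.wf⟩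

end QuotTransfer

lemma auxVS {R : Type u} [CommRing R] (I : Ideal R) [I.IsMaximal] {M : Type u}
    [AddCommGroup M] [Module R M] (h : ∀ r ∈ I, ∀ x : M, r • x = 0) :
    IsNoetherian R M ↔ IsArtinian R M := by
  have hT : Module.IsTorsionBySet R M I := fun x a => h a a.2 x
  letI := hT.module
  haveI : IsScalarTower R (R ⧸ I) M := hT.isScalarTower
  letI : Field (R ⧸ I) := Ideal.Quotient.field I
  haveI : IsSemisimpleModule (R ⧸ I) M := inferInstance
  constructor
  · intro hN
    haveI : IsNoetherian (R ⧸ I) M := isNoetherian_of_tower R hN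
    haveI : IsArtinian (R ⧸ I) M := (IsSemisimpleModule.finite_tfae.out 1 2).mp ‹_›
    exact isArtinian_of_quotScalars I ‹_›
  · intro hA
    haveI : IsArtinian (R ⧸ I) M := isArtinian_of_tower R hA
    haveI : IsNoetherian (R ⧸ I) M := (IsSemisimpleModule.finite_tfae.out 1 2).mpr ‹_›
    exact isNoetherian_of_quotScalars I ‹_›


lemma auxFL (R : Type u) [CommRing R] [IsNoetherianRing R] [IsLocalRing R] :
    ∀ (n : ℕ) (M : Type u) [AddCommGroup M] [Module R M],
      (∀ r ∈ maximalIdeal R ^ n, ∀ x : M, r • x = 0) →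
      ((IsNoetherian R M → IsArtinian R M) ∧ (IsArtinian R M → IsNoetherian R M)) := by
  intro n
  induction n with
  | zero =>
    intro M _ _ h
    haveI : Subsingleton M := subsingleton_iff_forall_eq 0 |>.mpr fun x => by
      simpa using h 1 (by simp) x
    exact ⟨fun _ => inferInstance, fun _ => inferInstance⟩
  | succ n ih =>
    intro M _ _ h
    set N : Submodule R M := maximalIdeal R • ⊤ with hNdef
    have hQ : ∀ r ∈ maximalIdeal R, ∀ x : M ⧸ N, r • x = 0 := by
      intro r hr x
      obtain ⟨y, rfl⟩ := N.mkQ_surjective x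
      rw [← map_smul]
      exact (Submodule.Quotient.mk_eq_zero N).mpr
        (Submodule.smul_mem_smul hr Submodule.mem_top)
    have hVS := auxVS (maximalIdeal R) hQ
    have hNt : ∀ r ∈ maximalIdeal R ^ n, ∀ x : N, r • x = 0 := by
      intro r hr x
      have hx : (x : M) ∈ (maximalIdeal R • ⊤ : Submodule R M) := x.2
      have key : ∀ c ∈ (maximalIdeal R • ⊤ : Submodule R M), r • c = 0 := by
        intro c hc
        refine Submodule.smul_induction_on hc (fun s hs y _ => ?_) (fun y z hy hz => ?_)
        · rw [smul_smul]
          exact h (r * s) (by rw [pow_succ]; exact Ideal.mul_mem_mul hr hs) y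
        · rw [smul_add, hy, hz, add_zero]
      exact Subtype.ext (by simpa using key _ hx)
    have ihN := ih N hNt
    constructor
    · intro hNoeth
      haveI := hNoeth
      haveI : IsArtinian R N := ihN.1 inferInstance
      haveI : IsArtinian R (M ⧸ N) := hVS.mp inferInstance
      exact (isArtinian_iff_submodule_quotient N).mpr ⟨‹_›, ‹_›⟩
    · intro hArt
      haveI := hArt
      haveI : IsNoetherian R N := ihN.2 inferInstance
      haveI : IsNoetherian R (M ⧸ N) := hVS.mpr inferInstance
      exact (isNoetherian_iff_submodule_quotient N).mpr ⟨‹_›, ‹_›⟩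


/-- If `R` is a commutative noetherian local ring and `A`, `A'` are artinian
`R`-modules, then `A ⊗_R A'` has finite length. -/
theorem tensor_artinian_artinian_isFiniteLength
    (R : Type u) [CommRing R] [IsNoetherianRing R] [IsLocalRing R]
    (A A' : Type u) [AddCommGroup A] [Module R A] [AddCommGroup A'] [Module R A']
    [IsArtinian R A] [IsArtinian R A'] :
    IsFiniteLength R (A ⊗[R] A') := by
  -- every element of an artinian module is killed by a power of the maximal ideal
  have tor : ∀ (M : Type u) [AddCommGroup M] [Module R M], ∀ [IsArtinian R M], ∀ b : M,
      ∃ k : ℕ, ∀ r ∈ maximalIdeal R ^ k, r • b = 0 := by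
    intro M _ _ _ b
    let f : ℕ →o (Submodule R M)ᵒᵈ :=
      ⟨fun k => maximalIdeal R ^ k • Submodule.span R {b}, fun k l hkl =>
        Submodule.smul_mono_left (Ideal.pow_le_pow_right hkl)⟩
    obtain ⟨k, hk⟩ := IsArtinian.monotone_stabilizes f
    set C : Submodule R M := maximalIdeal R ^ k • Submodule.span R {b} with hC
    have hle : C ≤ Submodule.span R {b} := Submodule.smul_le_right
    have hCC : C ≤ maximalIdeal R • C := by
      have h1 : C = maximalIdeal R ^ (k+1) • Submodule.span R {b} :=
        congrArg OrderDual.ofDual (hk (k + 1) (Nat.le_succ k))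
      have h2 : (maximalIdeal R ^ (k+1) • Submodule.span R {b} : Submodule R M)
          = maximalIdeal R • C := by
        rw [hC, pow_succ', ← Ideal.smul_eq_mul, Submodule.smul_assoc]
      exact le_of_eq (h1.trans h2)
    haveI : IsNoetherian R (Submodule.span R ({b} : Set M)) :=
      isNoetherian_span_of_finite R (Set.finite_singleton b)
    have hfg : C.FG := by
      have heq : C = Submodule.map (Submodule.span R ({b} : Set M)).subtype
          (Submodule.comap (Submodule.span R ({b} : Set M)).subtype C) := by
        rw [Submodule.map_comap_subtype]
        exact (inf_eq_right.mpr hle).symm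
      rw [heq]
      exact (IsNoetherian.noetherian _).map _
    have hbot : C = ⊥ :=
      Submodule.eq_bot_of_le_smul_of_le_jacobson_bot (maximalIdeal R) C hfg hCC
        (by rw [jacobson_eq_maximalIdeal ⊥ bot_ne_top])
    refine ⟨k, fun r hr => ?_⟩
    have : r • b ∈ C := Submodule.smul_mem_smul hr (Submodule.mem_span_singleton_self b)
    rw [hbot] at this
    simpa using this
  -- stabilization of the chain m^k • A
  obtain ⟨N, hstab⟩ := IsArtinian.monotone_stabilizes
    (⟨fun k => maximalIdeal R ^ k • (⊤ : Submodule R A), fun k l hkl =>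
      Submodule.smul_mono_left (Ideal.pow_le_pow_right hkl)⟩ : ℕ →o (Submodule R A)ᵒᵈ)
  -- m^N kills A ⊗ A'
  have hkill : ∀ r ∈ maximalIdeal R ^ N, ∀ x : A ⊗[R] A', r • x = 0 := by
    intro r hr x
    induction x using TensorProduct.induction_on with
    | zero => simp
    | tmul a b =>
      obtain ⟨k, hk⟩ := tor A' b
      have h1 : r • a ∈ (maximalIdeal R ^ k • (⊤ : Submodule R A) : Submodule R A) := by
        have h2 : r • a ∈ (maximalIdeal R ^ N • (⊤ : Submodule R A) : Submodule R A) :=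
          Submodule.smul_mem_smul hr Submodule.mem_top
        have he : (maximalIdeal R ^ N • (⊤ : Submodule R A) : Submodule R A)
            = maximalIdeal R ^ (N + k) • ⊤ :=
          congrArg OrderDual.ofDual (hstab (N + k) (Nat.le_add_right _ _))
        rw [he] at h2
        exact Submodule.smul_mono_left (Ideal.pow_le_pow_right (Nat.le_add_left k N)) h2
      have key : ∀ c ∈ (maximalIdeal R ^ k • (⊤ : Submodule R A) : Submodule R A),
          (c ⊗ₜ[R] b : A ⊗[R] A') = 0 := by
        intro c hc
        refine Submodule.smul_induction_on hc (fun s hs y _ => ?_) (fun y z hy hz => ?_)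
        · rw [TensorProduct.smul_tmul, hk s hs, TensorProduct.tmul_zero]
        · rw [TensorProduct.add_tmul, hy, hz, add_zero]
      rw [TensorProduct.smul_tmul']
      exact key _ h1
    | add x y hx hy => rw [smul_add, hx, hy, add_zero]
  -- quotients
  set qA : Submodule R A := maximalIdeal R ^ N • ⊤ with hqA
  set qA' : Submodule R A' := maximalIdeal R ^ N • ⊤ with hqA'
  -- the surjection from (A ⧸ qA) ⊗ (A' ⧸ qA')
  let C : A' →ₗ[R] A →ₗ[R] (A ⊗[R] A') := (TensorProduct.mk R A A').flip
  have keyA' : ∀ b ∈ qA', ∀ a : A, (a ⊗ₜ[R] b : A ⊗[R] A') = 0 := by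
    intro b hb
    refine Submodule.smul_induction_on hb (fun s hs y _ => fun a => ?_)
      (fun y z hy hz => fun a => ?_)
    · rw [TensorProduct.tmul_smul]
      exact hkill s hs _
    · rw [TensorProduct.tmul_add, hy a, hz a, add_zero]
  have keyA : ∀ a ∈ qA, ∀ b : A', (a ⊗ₜ[R] b : A ⊗[R] A') = 0 := by
    intro a ha
    refine Submodule.smul_induction_on ha (fun s hs y _ => fun b => ?_)
      (fun y z hy hz => fun b => ?_)
    · rw [← TensorProduct.smul_tmul']
      exact hkill s hs _
    · rw [TensorProduct.add_tmul, hy b, hz b, add_zero]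
  have hC : qA' ≤ LinearMap.ker C := by
    intro b hb
    rw [LinearMap.mem_ker]
    ext a
    simpa [C] using keyA' b hb a
  let C' : (A' ⧸ qA') →ₗ[R] A →ₗ[R] (A ⊗[R] A') := Submodule.liftQ qA' C hC
  let D : A →ₗ[R] (A' ⧸ qA') →ₗ[R] (A ⊗[R] A') := C'.flip
  have hD : qA ≤ LinearMap.ker D := by
    intro a ha
    rw [LinearMap.mem_ker]
    refine LinearMap.ext fun x => ?_
    obtain ⟨b, rfl⟩ := qA'.mkQ_surjective x
    simpa [D, C', C] using keyA a ha b
  let B : (A ⧸ qA) →ₗ[R] (A' ⧸ qA') →ₗ[R] (A ⊗[R] A') := Submodule.liftQ qA D hD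
  let φ : ((A ⧸ qA) ⊗[R] (A' ⧸ qA')) →ₗ[R] (A ⊗[R] A') := TensorProduct.lift B
  have hφ : Function.Surjective φ := by
    intro z
    induction z using TensorProduct.induction_on with
    | zero => exact ⟨0, map_zero φ⟩
    | tmul a b =>
      exact ⟨Submodule.Quotient.mk a ⊗ₜ Submodule.Quotient.mk b, by simp [φ, B, D, C', C]⟩
    | add x y hx hy =>
      obtain ⟨u, hu⟩ := hx
      obtain ⟨v, hv⟩ := hy
      exact ⟨u + v, by rw [map_add, hu, hv]⟩
  -- the source has finite length
  have hAq : ∀ r ∈ maximalIdeal R ^ N, ∀ x : A ⧸ qA, r • x = 0 := by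
    intro r hr x
    obtain ⟨y, rfl⟩ := qA.mkQ_surjective x
    rw [← map_smul]
    exact (Submodule.Quotient.mk_eq_zero qA).mpr (Submodule.smul_mem_smul hr Submodule.mem_top)
  have hA'q : ∀ r ∈ maximalIdeal R ^ N, ∀ x : A' ⧸ qA', r • x = 0 := by
    intro r hr x
    obtain ⟨y, rfl⟩ := qA'.mkQ_surjective x
    rw [← map_smul]
    exact (Submodule.Quotient.mk_eq_zero qA').mpr (Submodule.smul_mem_smul hr Submodule.mem_top)
  haveI : IsNoetherian R (A ⧸ qA) := (auxFL R N (A ⧸ qA) hAq).2 inferInstance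
  haveI : IsNoetherian R (A' ⧸ qA') := (auxFL R N (A' ⧸ qA') hA'q).2 inferInstance
  haveI : Module.Finite R (A ⧸ qA) := ⟨IsNoetherian.noetherian ⊤⟩
  haveI : Module.Finite R (A' ⧸ qA') := ⟨IsNoetherian.noetherian ⊤⟩
  haveI : IsNoetherian R ((A ⧸ qA) ⊗[R] (A' ⧸ qA')) :=
    isNoetherian_of_isNoetherianRing_of_finite R _
  have hSt : ∀ r ∈ maximalIdeal R ^ N, ∀ x : (A ⧸ qA) ⊗[R] (A' ⧸ qA'), r • x = 0 := by
    intro r hr x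
    induction x using TensorProduct.induction_on with
    | zero => simp
    | tmul x y => rw [TensorProduct.smul_tmul', hAq r hr x, TensorProduct.zero_tmul]
    | add x y hx hy => rw [smul_add, hx, hy, add_zero]
  haveI : IsArtinian R ((A ⧸ qA) ⊗[R] (A' ⧸ qA')) :=
    (auxFL R N ((A ⧸ qA) ⊗[R] (A' ⧸ qA')) hSt).1 inferInstance
  haveI : IsArtinian R (A ⊗[R] A') := isArtinian_of_surjective _ φ hφ
  haveI : IsNoetherian R (A ⊗[R] A') :=
    isNoetherian_of_surjective φ (LinearMap.range_eq_top.mpr hφ)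
  exact isFiniteLength_iff_isNoetherian_isArtinian.mpr ⟨‹_›, ‹_›⟩
end
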